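/- arXiv:1806.11128 — 3 statements merged into one kernel-verified Lean document; each statement's English description precedes it below -/
import Mathlib

section
/- Consider n bins with nonnegative weights w_1, ..., w_n summing to W, and X independent random attempts (X a positive integer), where for every bin i each attempt targets bin i with probability at least 1/X. Let S be the sum of the weights w_i over those bins i that are targeted by at least one of the X attempts. Then the expected uncollected weight satisfies E[W - S] ≤ W/e. -/
open MeasureTheory ProbabilityTheory

/-- Weighted balls-and-bins lemma (expectation form): `n` bins with nonnegative
weights `w i` summing to `W`, and `X` independent random attempts `T j : Ω → Fin n`
(`X` a positive integer), each attempt targeting each bin with probability at least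
`1/X`.  If `S ω` is the total weight of the bins targeted by at least one attempt,
then the expected uncollected weight satisfies `E[W - S] ≤ W / e`. -/
theorem balls_and_bins_expectation {Ω : Type*} [MeasurableSpace Ω]
    (μ : Measure Ω) [IsProbabilityMeasure μ]
    (n X : ℕ) (hX : 0 < X)
    (w : Fin n → ℝ) (hw : ∀ i, 0 ≤ w i)
    (W : ℝ) (hW : W = ∑ i, w i)
    (T : Fin X → Ω → Fin n)
    (hmeas : ∀ j, Measurable (T j))
    (hindep : iIndepFun T μ)
    (hprob : ∀ i j, (1 : ℝ) / X ≤ (μ {ω | T j ω = i}).toReal)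
    (S : Ω → ℝ)
    (hS : ∀ ω, S ω = ∑ i ∈ Finset.univ.filter (fun i => ∃ j, T j ω = i), w i) :
    ∫ ω, (W - S ω) ∂μ ≤ W / Real.exp 1 := by
  set A : Fin n → Set Ω := fun i => ⋂ j, T j ⁻¹' {i}ᶜ with hA
  have hAmeas : ∀ i, MeasurableSet (A i) :=
    fun i => MeasurableSet.iInter fun j => (hmeas j) (measurableSet_singleton i).compl
  have hXpos : (0:ℝ) < X := by exact_mod_cast hX
  -- key probability bound
  have key : ∀ i, (μ (A i)).toReal ≤ Real.exp (-1) := by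
    intro i
    have hprod : μ (A i) = ∏ j, μ (T j ⁻¹' {i}ᶜ) :=
      hindep.meas_iInter fun j => ⟨{i}ᶜ, (measurableSet_singleton i).compl, rfl⟩
    have hfac : ∀ j : Fin X, (μ (T j ⁻¹' {i}ᶜ)).toReal ≤ Real.exp (-(1/X)) := by
      intro j
      have hc : T j ⁻¹' {i}ᶜ = {ω | T j ω = i}ᶜ := by ext ω; simp
      have hms : MeasurableSet {ω | T j ω = i} := hmeas j (measurableSet_singleton i)
      have hμ : μ (T j ⁻¹' {i}ᶜ) = 1 - μ {ω | T j ω = i} := by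
        rw [hc, measure_compl hms (measure_ne_top μ _), measure_univ]
      rw [hμ, ENNReal.toReal_sub_of_le prob_le_one (by simp), ENNReal.toReal_one]
      have h1 := hprob i j
      have h2 := Real.add_one_le_exp (-(1/X : ℝ))
      linarith
    calc (μ (A i)).toReal = ∏ j, (μ (T j ⁻¹' {i}ᶜ)).toReal := by
          rw [hprod, ENNReal.toReal_prod]
      _ ≤ ∏ _j : Fin X, Real.exp (-(1/X)) :=
          Finset.prod_le_prod (fun j _ => ENNReal.toReal_nonneg) (fun j _ => hfac j)
      _ = Real.exp (-(1/X)) ^ X := by simp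
      _ = Real.exp (-1) := by
          rw [← Real.exp_nat_mul]
          congr 1
          field_simp
  -- pointwise rewrite
  have hpt : ∀ ω, W - S ω = ∑ i, Set.indicator (A i) (fun _ => w i) ω := by
    intro ω
    have hsplit := Finset.sum_filter_add_sum_filter_not Finset.univ
      (fun i => ∃ j, T j ω = i) w
    have hrw : ∑ i, Set.indicator (A i) (fun _ => w i) ω
        = ∑ i ∈ Finset.univ.filter (fun i => ¬ ∃ j, T j ω = i), w i := by
      rw [Finset.sum_filter]
      refine Finset.sum_congr rfl fun i _ => ?_
      by_cases h : ∃ j, T j ω = i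
      · obtain ⟨j, hj⟩ := h
        have : ω ∉ A i := by
          simp only [hA, Set.mem_iInter, Set.mem_preimage, Set.mem_compl_iff,
            Set.mem_singleton_iff, not_forall, not_not]
          exact ⟨j, hj⟩
        rw [Set.indicator_of_notMem this, if_neg (not_not_intro ⟨j, hj⟩)]
      · have : ω ∈ A i := by
          simp only [hA, Set.mem_iInter, Set.mem_preimage, Set.mem_compl_iff,
            Set.mem_singleton_iff]
          intro j hj
          exact h ⟨j, hj⟩
        rw [Set.indicator_of_mem this, if_pos h]
    rw [hrw, hS, hW, ← hsplit]
    ring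
  have hint : ∀ i ∈ Finset.univ (α := Fin n),
      Integrable (fun ω => Set.indicator (A i) (fun _ => w i) ω) μ :=
    fun i _ => (integrable_const (w i)).indicator (hAmeas i)
  calc ∫ ω, (W - S ω) ∂μ = ∫ ω, ∑ i, Set.indicator (A i) (fun _ => w i) ω ∂μ := by
        simp_rw [hpt]
    _ = ∑ i, ∫ ω, Set.indicator (A i) (fun _ => w i) ω ∂μ :=
        integral_finset_sum _ hint
    _ = ∑ i, (μ (A i)).toReal * w i := by
        refine Finset.sum_congr rfl fun i _ => ?_
        rw [integral_indicator_const (w i) (hAmeas i), smul_eq_mul, measureReal_def]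
    _ ≤ ∑ i, Real.exp (-1) * w i :=
        Finset.sum_le_sum fun i _ => mul_le_mul_of_nonneg_right (key i) (hw i)
    _ = W / Real.exp 1 := by
        rw [← Finset.mul_sum, ← hW, Real.exp_neg]
        ring
end

section
/- Consider n bins with nonnegative weights w_1, ..., w_n summing to W > 0, and X independent random attempts (X a positive integer), where for every bin i each attempt targets bin i with probability at least 1/X. Let S be the sum of the weights w_i over those bins i that are targeted by at least one of the X attempts. Then for every β with 0 < β < 1, the probability that S < βW is strictly less than 1/((1-β)e). -/
open MeasureTheory ProbabilityTheory

/-- Weighted balls-and-bins lemma (tail-bound form): with `n` bins of nonnegative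
weights summing to `W > 0` and `X` independent attempts, each targeting each bin
with probability at least `1/X`, the collected weight `S` satisfies, for every
`0 < β < 1`, `Pr[S < β W] < 1 / ((1 - β) e)`. -/
theorem balls_and_bins_tail {Ω : Type*} [MeasurableSpace Ω]
    (μ : Measure Ω) [IsProbabilityMeasure μ]
    (n X : ℕ) (hX : 0 < X)
    (w : Fin n → ℝ) (hw : ∀ i, 0 ≤ w i)
    (W : ℝ) (hW : W = ∑ i, w i) (hWpos : 0 < W)
    (T : Fin X → Ω → Fin n)
    (hmeas : ∀ j, Measurable (T j))
    (hindep : iIndepFun T μ)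
    (hprob : ∀ i j, (1 : ℝ) / X ≤ (μ {ω | T j ω = i}).toReal)
    (S : Ω → ℝ)
    (hS : ∀ ω, S ω = ∑ i ∈ Finset.univ.filter (fun i => ∃ j, T j ω = i), w i)
    (β : ℝ) (hβ0 : 0 < β) (hβ1 : β < 1) :
    (μ {ω | S ω < β * W}).toReal < 1 / ((1 - β) * Real.exp 1) := by
  have hXR : (0 : ℝ) < X := by exact_mod_cast hX
  set q : ℝ := 1 - 1 / X with hq
  have hq0 : 0 ≤ q := by
    have h1 : 1 / (X : ℝ) ≤ 1 := by
      rw [div_le_one hXR]; exact_mod_cast hX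
    rw [hq]; linarith
  -- miss sets
  set miss : Fin n → Set Ω := fun i => ⋂ j, T j ⁻¹' ({i}ᶜ) with hmiss
  have hmissMeas : ∀ i, MeasurableSet (miss i) :=
    fun i => MeasurableSet.iInter fun j => hmeas j (measurableSet_singleton i).compl
  -- measure of each miss set
  have hmissBound : ∀ i, (μ (miss i)).toReal ≤ q ^ X := by
    intro i
    have h1 : μ (miss i) = ∏ j, μ (T j ⁻¹' ({i}ᶜ)) := by
      have := hindep.measure_inter_preimage_eq_mul Finset.univ
        (sets := fun _ => ({i}ᶜ)) (fun j _ => (measurableSet_singleton i).compl)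
      simpa [miss] using this
    have h2 : (μ (miss i)).toReal = ∏ j, (μ (T j ⁻¹' ({i}ᶜ))).toReal := by
      rw [h1, ENNReal.toReal_prod]
    rw [h2]
    have hfac : ∀ j, (μ (T j ⁻¹' ({i}ᶜ))).toReal ≤ q := by
      intro j
      have hcompl : μ (T j ⁻¹' ({i}ᶜ)) = 1 - μ (T j ⁻¹' {i}) := by
        rw [Set.preimage_compl]
        exact prob_compl_eq_one_sub (hmeas j (measurableSet_singleton i))
      have hle : μ (T j ⁻¹' {i}) ≤ 1 := prob_le_one
      have : (μ (T j ⁻¹' ({i}ᶜ))).toReal = 1 - (μ (T j ⁻¹' {i})).toReal := by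
        rw [hcompl, ENNReal.toReal_sub_of_le hle ENNReal.one_ne_top, ENNReal.toReal_one]
      rw [this]
      have := hprob i j
      have hset : {ω | T j ω = i} = T j ⁻¹' {i} := rfl
      rw [hset] at this
      simp only [hq]
      linarith
    calc ∏ j, (μ (T j ⁻¹' ({i}ᶜ))).toReal
        ≤ ∏ _j : Fin X, q :=
          Finset.prod_le_prod (fun j _ => ENNReal.toReal_nonneg) (fun j _ => hfac j)
      _ = q ^ X := by simp
  -- the uncollected weight
  set U : Ω → ℝ := fun ω => ∑ i, Set.indicator (miss i) (fun _ => w i) ω with hUdef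
  have hUeq : ∀ ω, U ω = W - S ω := by
    intro ω
    have hmem : ∀ i, ω ∈ miss i ↔ ¬ ∃ j, T j ω = i := by
      intro i
      simp [miss]
    have : U ω = ∑ i ∈ Finset.univ.filter (fun i => ¬ ∃ j, T j ω = i), w i := by
      rw [hUdef]
      rw [Finset.sum_filter]
      refine Finset.sum_congr rfl fun i _ => ?_
      by_cases h : ∃ j, T j ω = i
      · rw [Set.indicator_of_notMem (fun hm => (hmem i).mp hm h), if_neg (not_not.mpr h)]
      · rw [Set.indicator_of_mem ((hmem i).mpr h), if_pos h]
    rw [this, hS ω, hW, eq_sub_iff_add_eq, add_comm]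
    exact Finset.sum_filter_add_sum_filter_not _ _ _
  have hUnonneg : ∀ ω, 0 ≤ U ω :=
    fun ω => Finset.sum_nonneg fun i _ => Set.indicator_nonneg (fun _ _ => hw i) ω
  have hUint : Integrable U μ :=
    integrable_finset_sum _ fun i _ =>
      (integrable_const (w i)).indicator (hmissMeas i)
  have hUint_eq : ∫ ω, U ω ∂μ = ∑ i, (μ (miss i)).toReal * w i := by
    rw [hUdef]
    rw [integral_finset_sum _ fun i _ => (integrable_const (w i)).indicator (hmissMeas i)]
    refine Finset.sum_congr rfl fun i _ => ?_
    rw [integral_indicator_const _ (hmissMeas i)]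
    simp [smul_eq_mul, Measure.real]
  have hEU : ∫ ω, U ω ∂μ ≤ W * q ^ X := by
    rw [hUint_eq, hW, Finset.sum_mul]
    refine Finset.sum_le_sum fun i _ => ?_
    rw [mul_comm (w i)]
    exact mul_le_mul_of_nonneg_right (hmissBound i) (hw i)
  -- q ^ X < exp (-1)
  have hqX : q ^ X < Real.exp (-1) := by
    have h1 : q < Real.exp (-(1 / X)) := by
      have hne : -(1 / (X : ℝ)) ≠ 0 := neg_ne_zero.mpr (by positivity)
      have := Real.add_one_lt_exp hne
      rw [hq]; linarith
    calc q ^ X < (Real.exp (-(1 / X))) ^ X :=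
          pow_lt_pow_left₀ h1 hq0 hX.ne'
      _ = Real.exp (-1) := by
          rw [← Real.exp_nat_mul]
          congr 1
          field_simp
  -- Markov
  set c : ℝ := (1 - β) * W with hc
  have hcpos : 0 < c := mul_pos (by linarith) hWpos
  have hsub : {ω | S ω < β * W} ⊆ {ω | c ≤ U ω} := by
    intro ω hω
    simp only [Set.mem_setOf_eq] at hω ⊢
    rw [hUeq ω, hc]
    nlinarith
  have hmono : (μ {ω | S ω < β * W}).toReal ≤ (μ {ω | c ≤ U ω}).toReal :=
    ENNReal.toReal_mono (measure_ne_top μ _) (measure_mono hsub)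
  have hmarkov : c * (μ {ω | c ≤ U ω}).toReal ≤ ∫ ω, U ω ∂μ :=
    mul_meas_ge_le_integral_of_nonneg (Filter.Eventually.of_forall hUnonneg) hUint c
  have hfinal : c * (μ {ω | S ω < β * W}).toReal < W * Real.exp (-1) := by
    have h1 : c * (μ {ω | S ω < β * W}).toReal ≤ c * (μ {ω | c ≤ U ω}).toReal :=
      mul_le_mul_of_nonneg_left hmono hcpos.le
    have h2 : W * q ^ X < W * Real.exp (-1) :=
      mul_lt_mul_of_pos_left hqX hWpos
    linarith
  rw [Real.exp_neg] at hfinal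
  have hepos := Real.exp_pos 1
  rw [lt_div_iff₀ (mul_pos (by linarith) hepos)]
  calc (μ {ω | S ω < β * W}).toReal * ((1 - β) * Real.exp 1)
      = (c * (μ {ω | S ω < β * W}).toReal) * Real.exp 1 / W := by
        rw [hc]; field_simp
    _ < (W * (Real.exp 1)⁻¹) * Real.exp 1 / W := by
        gcongr
    _ = 1 := by field_simp
end

section
/- Consider n bins with nonnegative weights w_1, ..., w_n summing to W > 0, and X independent random attempts (X a positive integer), where for every bin i each attempt targets bin i with probability at least 1/X. Let S be the sum of the weights w_i over those bins i that are targeted by at least one of the X attempts. Then the probability that S ≥ W/2 is at least 1 - 2/e, and in particular at least 1/4. -/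
open MeasureTheory ProbabilityTheory

/-- Weighted balls-and-bins, instantiated with `β = 1/2`: with `n` bins of
nonnegative weights summing to `W > 0` and `X` independent attempts, each
targeting each bin with probability at least `1/X`, the collected weight `S`
satisfies `Pr[S ≥ W/2] ≥ 1 - 2/e`, and in particular `Pr[S ≥ W/2] ≥ 1/4`. -/
theorem balls_and_bins_half {Ω : Type*} [MeasurableSpace Ω]
    (μ : Measure Ω) [IsProbabilityMeasure μ]
    (n X : ℕ) (hX : 0 < X)
    (w : Fin n → ℝ) (hw : ∀ i, 0 ≤ w i)
    (W : ℝ) (hW : W = ∑ i, w i) (hWpos : 0 < W)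
    (T : Fin X → Ω → Fin n)
    (hmeas : ∀ j, Measurable (T j))
    (hindep : iIndepFun T μ)
    (hprob : ∀ i j, (1 : ℝ) / X ≤ (μ {ω | T j ω = i}).toReal)
    (S : Ω → ℝ)
    (hS : ∀ ω, S ω = ∑ i ∈ Finset.univ.filter (fun i => ∃ j, T j ω = i), w i) :
    1 - 2 / Real.exp 1 ≤ (μ {ω | W / 2 ≤ S ω}).toReal ∧
    (1 : ℝ) / 4 ≤ (μ {ω | W / 2 ≤ S ω}).toReal := by
  have hXR : (0:ℝ) < X := Nat.cast_pos.mpr hX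
  -- the "miss" sets
  set A : Fin n → Set Ω := fun i => ⋂ j, (T j) ⁻¹' ({i}ᶜ) with hA
  have hAmeas : ∀ i, MeasurableSet (A i) := fun i =>
    MeasurableSet.iInter fun j => hmeas j (measurableSet_singleton i).compl
  -- f = uncollected weight
  set f : Ω → ℝ := fun ω => ∑ i, (A i).indicator (fun _ => w i) ω with hf
  have hfS : ∀ ω, f ω = W - S ω := by
    intro ω
    have : S ω + f ω = W := by
      rw [hS, hf, hW]
      have : ∀ ω', (∑ i, (A i).indicator (fun _ => w i) ω')
          = ∑ i ∈ Finset.univ.filter (fun i => ¬ ∃ j, T j ω' = i), w i := by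
        intro ω'
        rw [Finset.sum_filter]
        refine Finset.sum_congr rfl fun i _ => ?_
        by_cases h : ∃ j, T j ω' = i
        · have : ω' ∉ A i := by
            obtain ⟨j, hj⟩ := h
            simp [hA, Set.mem_iInter]
            exact ⟨j, hj⟩
          simp [Set.indicator_of_notMem this, h]
        · have : ω' ∈ A i := by
            simp only [hA, Set.mem_iInter, Set.mem_preimage, Set.mem_compl_iff,
              Set.mem_singleton_iff]
            intro j hj
            exact h ⟨j, hj⟩
          simp [Set.indicator_of_mem this, h]
      beta_reduce
      rw [this ω]
      exact Finset.sum_filter_add_sum_filter_not _ _ _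
    linarith
  have hf_nonneg : ∀ ω, 0 ≤ f ω :=
    fun ω => Finset.sum_nonneg fun i _ => Set.indicator_nonneg (fun _ _ => hw i) ω
  have hf_meas : Measurable f :=
    Finset.measurable_sum _ fun i _ => (measurable_const.indicator (hAmeas i))
  have hf_int : Integrable f μ :=
    integrable_finset_sum _ fun i _ => (integrable_const (w i)).indicator (hAmeas i)
  -- probability of missing one bin
  have hmiss : ∀ i, (μ (A i)).toReal ≤ Real.exp (-1) := by
    intro i
    have hprod : μ (A i) = ∏ j, μ ((T j) ⁻¹' ({i}ᶜ)) := by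
      refine hindep.meas_iInter fun j => ?_
      exact ⟨{i}ᶜ, (measurableSet_singleton i).compl, rfl⟩
    have hbd : ∀ j : Fin X, (μ ((T j) ⁻¹' ({i}ᶜ))).toReal ≤ 1 - 1 / X := by
      intro j
      have hc : ((T j) ⁻¹' ({i}ᶜ)) = {ω | T j ω = i}ᶜ := by
        ext ω; simp [Set.mem_preimage]
      have hms : MeasurableSet {ω | T j ω = i} := hmeas j (measurableSet_singleton i)
      have : μ ({ω | T j ω = i}ᶜ) = 1 - μ {ω | T j ω = i} :=
        prob_compl_eq_one_sub hms
      rw [hc, this, ENNReal.toReal_sub_of_le prob_le_one ENNReal.one_ne_top]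
      simp only [ENNReal.toReal_one]
      linarith [hprob i j]
    have hnn : ∀ j : Fin X, 0 ≤ (μ ((T j) ⁻¹' ({i}ᶜ))).toReal := fun j => ENNReal.toReal_nonneg
    have h1X : (0:ℝ) ≤ 1 - 1 / X := by
      have : (1:ℝ) / X ≤ 1 := by
        rw [div_le_one hXR]
        exact_mod_cast hX
      linarith
    calc (μ (A i)).toReal = ∏ j, (μ ((T j) ⁻¹' ({i}ᶜ))).toReal := by
          rw [hprod, ENNReal.toReal_prod]
      _ ≤ ∏ _j : Fin X, (1 - 1 / (X:ℝ)) :=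
          Finset.prod_le_prod (fun j _ => hnn j) (fun j _ => hbd j)
      _ = (1 - 1 / (X:ℝ)) ^ X := by simp
      _ ≤ (Real.exp (-(1/X))) ^ X := by
          refine pow_le_pow_left₀ h1X ?_ X
          have := Real.add_one_le_exp (-(1/(X:ℝ)))
          linarith
      _ = Real.exp (-1) := by
          rw [← Real.exp_nat_mul]
          congr 1
          field_simp
  -- expected uncollected weight
  have hint_le : ∫ ω, f ω ∂μ ≤ W * Real.exp (-1) := by
    have : ∫ ω, f ω ∂μ = ∑ i, (μ (A i)).toReal * w i := by
      rw [hf, integral_finset_sum _ fun i _ => (integrable_const (w i)).indicator (hAmeas i)]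
      refine Finset.sum_congr rfl fun i _ => ?_
      rw [integral_indicator_const _ (hAmeas i)]
      simp [smul_eq_mul, measureReal_def]
    rw [this, hW, Finset.sum_mul]
    refine Finset.sum_le_sum fun i _ => ?_
    rw [mul_comm (w i)]
    exact mul_le_mul_of_nonneg_right (hmiss i) (hw i)
  -- Markov
  have hmarkov : (W/2) * (μ {ω | W/2 ≤ f ω}).toReal ≤ W * Real.exp (-1) :=
    le_trans (mul_meas_ge_le_integral_of_nonneg
      (Filter.Eventually.of_forall hf_nonneg) hf_int (W/2)) hint_le
  have hmark : (μ {ω | W/2 ≤ f ω}).toReal ≤ 2 / Real.exp 1 := by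
    have hp : 0 ≤ (μ {ω | W/2 ≤ f ω}).toReal := ENNReal.toReal_nonneg
    have h2 : (μ {ω | W/2 ≤ f ω}).toReal ≤ 2 * Real.exp (-1) := by nlinarith
    rw [Real.exp_neg] at h2
    rw [div_eq_mul_inv]
    exact h2
  -- translate sets
  have hset : {ω | W / 2 ≤ S ω} = {ω | W/2 < f ω}ᶜ := by
    ext ω
    simp only [Set.mem_setOf_eq, Set.mem_compl_iff, not_lt, hfS ω]
    constructor <;> intro h <;> linarith
  have hsub : μ {ω | W/2 < f ω} ≤ μ {ω | W/2 ≤ f ω} :=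
    measure_mono (Set.setOf_subset_setOf.mpr fun ω h => le_of_lt h)
  have hlt_meas : MeasurableSet {ω | W/2 < f ω} := hf_meas measurableSet_Ioi
  have hcompl : (μ {ω | W / 2 ≤ S ω}).toReal = 1 - (μ {ω | W/2 < f ω}).toReal := by
    rw [hset, prob_compl_eq_one_sub hlt_meas,
      ENNReal.toReal_sub_of_le prob_le_one ENNReal.one_ne_top]
    simp
  have hltle : (μ {ω | W/2 < f ω}).toReal ≤ 2 / Real.exp 1 :=
    le_trans (ENNReal.toReal_mono (measure_ne_top μ _) hsub) hmark
  have h1 : 1 - 2 / Real.exp 1 ≤ (μ {ω | W / 2 ≤ S ω}).toReal := by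
    rw [hcompl]; linarith
  refine ⟨h1, le_trans ?_ h1⟩
  have he : (2.7182818283 : ℝ) < Real.exp 1 := Real.exp_one_gt_d9
  have hepos := Real.exp_pos (1:ℝ)
  have h34 : 2 / Real.exp 1 ≤ 3/4 := by
    rw [div_le_iff₀ hepos]; nlinarith
  linarith
end
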